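/- Let n ∈ ℕ, p ∈ [0,1]^n, and let f : {0,1}^n → ℝ be monotone and 1-Lipschitz. Let k ≥ 1 be a real number with √(log k / k) ≤ 1, and set s = √(log k / k). Then the measure under μ_{e^{-s}p} of the set {x ∈ {0,1}^n : f(x) ≥ ∫ f dμ_p + √(k · log k)} is at most 1/k. -/

import Mathlib

open MeasureTheory

/-- The Bernoulli measure on `Bool` with parameter `q`. -/
noncomputable def bernoulliMeasure (q : ℝ) : Measure Bool :=
  (ENNReal.ofReal q) • Measure.dirac true + (ENNReal.ofReal (1 - q)) • Measure.dirac false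

/-- The product Bernoulli measure `μ_p` on `{0,1}^n`. -/
noncomputable def productBernoulli {n : ℕ} (p : Fin n → ℝ) : Measure (Fin n → Bool) :=
  Measure.pi fun i => bernoulliMeasure (p i)

/-- `f` is 1-Lipschitz with respect to the Hamming distance on `{0,1}^n`. -/
def OneLipschitz {n : ℕ} (f : (Fin n → Bool) → ℝ) : Prop :=
  ∀ x y : Fin n → Bool,
    |f x - f y| ≤ (Finset.univ.filter fun i => x i ≠ y i).card

noncomputable def bw {n : ℕ} (p : Fin n → ℝ) (x : Fin n → Bool) : ℝ :=
  ∏ i, (if x i then p i else 1 - p i)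

lemma bw_nonneg {n : ℕ} {p : Fin n → ℝ} (hp : ∀ i, p i ∈ Set.Icc (0:ℝ) 1)
    (x : Fin n → Bool) : 0 ≤ bw p x := by
  apply Finset.prod_nonneg
  intro i _
  rcases hp i with ⟨h0, h1⟩
  split <;> linarith

-- key scalar inequality
lemma key_ineq {s q δ : ℝ} (hs : 0 ≤ s) (hq0 : 0 ≤ q) (hq1 : q ≤ 1)
    (hδ0 : 0 ≤ δ) (hδ1 : δ ≤ 1) :
    (1 - Real.exp (-s) * q) + Real.exp (-s) * q * Real.exp (s * δ)
      ≤ Real.exp (s * (q * δ)) := by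
  have hconv : Real.exp (s * δ) ≤ 1 + δ * (Real.exp s - 1) := by
    have := convexOn_exp.2 (Set.mem_univ (0:ℝ)) (Set.mem_univ s)
      (by linarith : (0:ℝ) ≤ 1 - δ) hδ0 (by ring : (1 - δ) + δ = 1)
    have h' : Real.exp (s * δ) ≤ 1 - δ + δ * Real.exp s := by
      simpa [mul_comm] using this
    linarith
  have h1 : 1 - Real.exp (-s) ≤ s := by
    have := Real.add_one_le_exp (-s); linarith
  have h2 : 1 + s * (q * δ) ≤ Real.exp (s * (q * δ)) := by
    have := Real.add_one_le_exp (s * (q * δ)); linarith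
  have hes : Real.exp (-s) * Real.exp s = 1 := by
    rw [← Real.exp_add]; simp
  have hepos : 0 < Real.exp (-s) := Real.exp_pos _
  nlinarith [mul_nonneg hq0 hδ0, mul_nonneg (mul_nonneg hq0 hδ0) hepos.le,
    mul_le_mul_of_nonneg_left hconv (mul_nonneg hepos.le hq0)]

lemma card_diff_cons {n : ℕ} (b : Bool) (x y : Fin n → Bool) :
    (Finset.univ.filter fun i => (Fin.cons b x : Fin (n+1) → Bool) i ≠ (Fin.cons b y : Fin (n+1) → Bool) i).card
      = (Finset.univ.filter fun i => x i ≠ y i).card := by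
  classical
  rw [← Finset.card_map ⟨Fin.succ, Fin.succ_injective n⟩]
  congr 1
  ext j
  simp only [Finset.mem_map, Finset.mem_filter, Finset.mem_univ, true_and,
    Function.Embedding.coeFn_mk]
  constructor
  · refine Fin.cases (motive := fun j => (Fin.cons b x : Fin (n+1) → Bool) j ≠ (Fin.cons b y : Fin (n+1) → Bool) j →
      ∃ i, x i ≠ y i ∧ Fin.succ i = j) ?_ ?_ j
    · intro h; simp at h
    · intro i h
      exact ⟨i, by simpa using h, rfl⟩
  · rintro ⟨i, hi, rfl⟩
    simpa using hi

lemma monotone_cons_fix {n : ℕ} (f : (Fin (n+1) → Bool) → ℝ) (hf : Monotone f) (b : Bool) :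
    Monotone (fun x : Fin n → Bool => f (Fin.cons b x)) := by
  intro x y hxy
  exact hf (Fin.cons_le_cons.mpr ⟨le_refl b, hxy⟩)

lemma lip_cons_fix {n : ℕ} (f : (Fin (n+1) → Bool) → ℝ) (hf : OneLipschitz f) (b : Bool) :
    OneLipschitz (fun x : Fin n → Bool => f (Fin.cons b x)) := by
  intro x y
  have := hf (Fin.cons b x) (Fin.cons b y)
  rwa [card_diff_cons] at this

lemma delta_mem {n : ℕ} (f : (Fin (n+1) → Bool) → ℝ) (hmono : Monotone f)
    (hlip : OneLipschitz f) (x : Fin n → Bool) :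
    f (Fin.cons true x) - f (Fin.cons false x) ∈ Set.Icc (0:ℝ) 1 := by
  constructor
  · have : (Fin.cons false x : Fin (n+1) → Bool) ≤ Fin.cons true x :=
      Fin.cons_le_cons.mpr ⟨by simp, le_refl _⟩
    linarith [hmono this]
  · have h := hlip (Fin.cons true x) (Fin.cons false x)
    have hcard : (Finset.univ.filter fun i => (Fin.cons true x : Fin (n+1) → Bool) i ≠ (Fin.cons false x : Fin (n+1) → Bool) i)
        = {(0 : Fin (n+1))} := by
      ext j
      simp only [Finset.mem_filter, Finset.mem_univ, true_and, Finset.mem_singleton]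
      refine Fin.cases (motive := fun j =>
        ((Fin.cons true x : Fin (n+1) → Bool) j ≠ (Fin.cons false x : Fin (n+1) → Bool) j) ↔ j = 0) ?_ ?_ j
      · simp
      · intro i; simp [Fin.succ_ne_zero]
    rw [hcard] at h
    simp at h
    calc f (Fin.cons true x) - f (Fin.cons false x)
        ≤ |f (Fin.cons true x) - f (Fin.cons false x)| := le_abs_self _
      _ ≤ 1 := h

lemma scaled_mem {s q : ℝ} (hs : 0 ≤ s) (hq : q ∈ Set.Icc (0:ℝ) 1) :
    Real.exp (-s) * q ∈ Set.Icc (0:ℝ) 1 := by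
  have h1 : Real.exp (-s) ≤ 1 := Real.exp_le_one_iff.mpr (by linarith)
  constructor
  · exact mul_nonneg (Real.exp_pos _).le hq.1
  · nlinarith [(Real.exp_pos (-s)).le, hq.1, hq.2]

lemma bw_cons {n : ℕ} (p : Fin (n+1) → ℝ) (b : Bool) (x : Fin n → Bool) :
    bw p (Fin.cons b x) = (if b then p 0 else 1 - p 0) * bw (Fin.tail p) x := by
  rw [bw, Fin.prod_univ_succ]
  simp [bw, Fin.tail, Fin.cons_zero, Fin.cons_succ]

lemma mgf_le (n : ℕ) : ∀ (p : Fin n → ℝ), (∀ i, p i ∈ Set.Icc (0:ℝ) 1) →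
    ∀ (f : (Fin n → Bool) → ℝ), Monotone f → OneLipschitz f →
    ∀ (s : ℝ), 0 ≤ s →
    ∑ x, bw (fun i => Real.exp (-s) * p i) x * Real.exp (s * f x)
      ≤ Real.exp (s * ∑ x, bw p x * f x) := by
  induction n with
  | zero =>
    intro p hp f _ _ s _
    rw [Fintype.sum_unique, Fintype.sum_unique]
    simp [bw]
  | succ n ih =>
    intro p hp f hmono hlip s hs
    have hq := hp 0
    set q := p 0 with hqdef
    -- tail facts
    have htp : ∀ i, Fin.tail p i ∈ Set.Icc (0:ℝ) 1 := fun i => hp i.succ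
    -- the averaged function
    set h : (Fin n → Bool) → ℝ :=
      fun x => (1 - q) * f (Fin.cons false x) + q * f (Fin.cons true x) with hh
    have hmono' : Monotone h := by
      intro x y hxy
      have h0 := monotone_cons_fix f hmono false hxy
      have h1 := monotone_cons_fix f hmono true hxy
      simp only [hh]
      have : (0:ℝ) ≤ 1 - q := by linarith [hq.2]
      nlinarith [hq.1]
    have hlip' : OneLipschitz h := by
      intro x y
      have h0 := lip_cons_fix f hlip false x y
      have h1 := lip_cons_fix f hlip true x y
      simp only [hh]
      have habs : |((1-q) * f (Fin.cons false x) + q * f (Fin.cons true x))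
          - ((1-q) * f (Fin.cons false y) + q * f (Fin.cons true y))|
          ≤ (1-q) * |f (Fin.cons false x) - f (Fin.cons false y)|
            + q * |f (Fin.cons true x) - f (Fin.cons true y)| := by
        have e : ((1-q) * f (Fin.cons false x) + q * f (Fin.cons true x))
          - ((1-q) * f (Fin.cons false y) + q * f (Fin.cons true y))
          = (1-q) * (f (Fin.cons false x) - f (Fin.cons false y))
            + q * (f (Fin.cons true x) - f (Fin.cons true y)) := by ring
        rw [e]
        refine (abs_add_le _ _).trans ?_
        rw [abs_mul, abs_mul, abs_of_nonneg (by linarith [hq.2] : (0:ℝ) ≤ 1 - q),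
          abs_of_nonneg hq.1]
      refine habs.trans ?_
      simp only at h0 h1
      nlinarith [hq.1, hq.2, abs_nonneg (f (Fin.cons false x) - f (Fin.cons false y)),
        abs_nonneg (f (Fin.cons true x) - f (Fin.cons true y))]
    -- rewrite both sums over the cons equivalence
    have esum : ∀ (F : (Fin (n+1) → Bool) → ℝ),
        ∑ x, F x = ∑ x : Fin n → Bool, (F (Fin.cons false x) + F (Fin.cons true x)) := by
      intro F
      rw [← Equiv.sum_comp (Fin.consEquiv fun _ => Bool) F]
      rw [Fintype.sum_prod_type_right]
      simp [Fin.consEquiv]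
      exact Finset.sum_congr rfl fun x _ => add_comm _ _
    rw [esum, esum]
    -- bound LHS termwise
    have step1 : ∑ x : Fin n → Bool,
        (bw (fun i => Real.exp (-s) * p i) (Fin.cons false x)
            * Real.exp (s * f (Fin.cons false x))
          + bw (fun i => Real.exp (-s) * p i) (Fin.cons true x)
            * Real.exp (s * f (Fin.cons true x)))
        ≤ ∑ x : Fin n → Bool,
          bw (fun i => Real.exp (-s) * Fin.tail p i) x * Real.exp (s * h x) := by
      apply Finset.sum_le_sum
      intro x _
      rw [bw_cons, bw_cons]
      have hbw : (0:ℝ) ≤ bw (Fin.tail fun i => Real.exp (-s) * p i) x :=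
        bw_nonneg (fun i => scaled_mem hs (hp i.succ)) x
      have hδ := delta_mem f hmono hlip x
      set δ := f (Fin.cons true x) - f (Fin.cons false x) with hδdef
      have key := key_ineq hs hq.1 hq.2 hδ.1 hδ.2 (s := s)
      have hg1 : f (Fin.cons true x) = f (Fin.cons false x) + δ := by rw [hδdef]; ring
      have hhx : h x = f (Fin.cons false x) + q * δ := by rw [hh, hδdef]; ring
      have htail : (Fin.tail fun i => Real.exp (-s) * p i)
          = fun i => Real.exp (-s) * Fin.tail p i := rfl
      rw [← htail]
      have e1 : Real.exp (s * f (Fin.cons true x))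
          = Real.exp (s * f (Fin.cons false x)) * Real.exp (s * δ) := by
        rw [← Real.exp_add, hg1]; ring_nf
      have e2 : Real.exp (s * h x)
          = Real.exp (s * f (Fin.cons false x)) * Real.exp (s * (q * δ)) := by
        rw [← Real.exp_add, hhx]; ring_nf
      rw [e1, e2]
      norm_num
      rw [← hqdef]
      have hexp0 : (0:ℝ) ≤ Real.exp (s * f (Fin.cons false x)) := (Real.exp_pos _).le
      nlinarith [mul_le_mul_of_nonneg_left key (mul_nonneg hbw hexp0)]
    refine step1.trans ?_
    have step2 := ih (Fin.tail p) htp h hmono' hlip' s hs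
    refine step2.trans ?_
    apply Real.exp_le_exp.mpr
    apply mul_le_mul_of_nonneg_left _ hs
    apply le_of_eq
    apply Finset.sum_congr rfl
    intro x _
    rw [bw_cons, bw_cons]
    simp only [hh]
    norm_num
    ring

lemma bernoulli_isProb {q : ℝ} (hq : q ∈ Set.Icc (0:ℝ) 1) :
    IsProbabilityMeasure (bernoulliMeasure q) := by
  constructor
  simp only [bernoulliMeasure, Measure.add_apply, Measure.smul_apply, smul_eq_mul,
    Measure.dirac_apply_of_mem (Set.mem_univ _), mul_one]
  rw [← ENNReal.ofReal_add hq.1 (by linarith [hq.2])]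
  norm_num

lemma bernoulli_singleton {q : ℝ} (hq : q ∈ Set.Icc (0:ℝ) 1) (b : Bool) :
    bernoulliMeasure q {b} = ENNReal.ofReal (if b then q else 1 - q) := by
  cases b <;>
    simp [bernoulliMeasure, Measure.dirac_apply' _ (measurableSet_singleton _),
      Set.indicator]

lemma productBernoulli_singleton {n : ℕ} (p : Fin n → ℝ)
    (hp : ∀ i, p i ∈ Set.Icc (0:ℝ) 1) (x : Fin n → Bool) :
    productBernoulli p {x} = ENNReal.ofReal (bw p x) := by
  haveI : ∀ i, IsProbabilityMeasure (bernoulliMeasure (p i)) :=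
    fun i => bernoulli_isProb (hp i)
  rw [productBernoulli, ← Set.univ_pi_singleton, Measure.pi_pi]
  rw [bw, ENNReal.ofReal_prod_of_nonneg (fun i _ => by
    rcases hp i with ⟨h0, h1⟩; split <;> linarith)]
  exact Finset.prod_congr rfl fun i _ => bernoulli_singleton (hp i) (x i)

lemma productBernoulli_isProb {n : ℕ} (p : Fin n → ℝ)
    (hp : ∀ i, p i ∈ Set.Icc (0:ℝ) 1) :
    IsProbabilityMeasure (productBernoulli p) := by
  haveI : ∀ i, IsProbabilityMeasure (bernoulliMeasure (p i)) :=
    fun i => bernoulli_isProb (hp i)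
  rw [productBernoulli]
  infer_instance

lemma productBernoulli_integral {n : ℕ} (p : Fin n → ℝ)
    (hp : ∀ i, p i ∈ Set.Icc (0:ℝ) 1) (f : (Fin n → Bool) → ℝ) :
    ∫ y, f y ∂(productBernoulli p) = ∑ x, bw p x * f x := by
  haveI := productBernoulli_isProb p hp
  rw [integral_fintype (Integrable.of_finite)]
  refine Finset.sum_congr rfl fun x _ => ?_
  rw [measureReal_def, productBernoulli_singleton p hp x, ENNReal.toReal_ofReal (bw_nonneg hp x)]
  simp [mul_comm]

/-- For a monotone 1-Lipschitz `f`, a real `k ≥ 1` with `√(log k / k) ≤ 1`, and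
`s = √(log k / k)`: `Pr[f(X^{(s)}) ≥ E[f(X)] + √(k log k)] ≤ 1/k`. -/
theorem bicriterion_concentration_instantiated {n : ℕ} (p : Fin n → ℝ)
    (hp : ∀ i, p i ∈ Set.Icc (0 : ℝ) 1)
    (f : (Fin n → Bool) → ℝ) (hf_mono : Monotone f) (hf_lip : OneLipschitz f)
    (k : ℝ) (hk : 1 ≤ k) (hs : Real.sqrt (Real.log k / k) ≤ 1) :
    productBernoulli (fun i => Real.exp (-Real.sqrt (Real.log k / k)) * p i)
        {x | (∫ y, f y ∂(productBernoulli p)) + Real.sqrt (k * Real.log k) ≤ f x}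
      ≤ ENNReal.ofReal (1 / k) := by
  classical
  have hk0 : (0:ℝ) < k := by linarith
  have hlog : (0:ℝ) ≤ Real.log k := Real.log_nonneg hk
  set s : ℝ := Real.sqrt (Real.log k / k) with hsdef
  set t : ℝ := Real.sqrt (k * Real.log k) with htdef
  have hs0 : 0 ≤ s := Real.sqrt_nonneg _
  have hst : s * t = Real.log k := by
    rw [hsdef, htdef, ← Real.sqrt_mul (div_nonneg hlog hk0.le)]
    have : Real.log k / k * (k * Real.log k) = (Real.log k) ^ 2 := by
      field_simp
    rw [this, Real.sqrt_sq hlog]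
  set p' : Fin n → ℝ := fun i => Real.exp (-s) * p i with hp'def
  have hp' : ∀ i, p' i ∈ Set.Icc (0:ℝ) 1 := fun i => scaled_mem hs0 (hp i)
  set M : ℝ := ∫ y, f y ∂(productBernoulli p) with hMdef
  have hM : M = ∑ x, bw p x * f x := productBernoulli_integral p hp f
  set A : Set (Fin n → Bool) := {x | M + t ≤ f x} with hAdef
  have hAfin : A.Finite := Set.toFinite A
  -- measure of A as a finite sum
  have hmeas : productBernoulli p' A = ∑ x ∈ hAfin.toFinset, productBernoulli p' {x} := by
    have h := sum_measure_preimage_singleton (μ := productBernoulli p') hAfin.toFinset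
      (f := id) (fun y _ => (measurableSet_singleton y).preimage measurable_id)
    simp only [Set.preimage_id, hAfin.coe_toFinset] at h
    exact h.symm
  rw [hmeas]
  have hsum : ∑ x ∈ hAfin.toFinset, productBernoulli p' {x}
      = ENNReal.ofReal (∑ x ∈ hAfin.toFinset, bw p' x) := by
    rw [ENNReal.ofReal_sum_of_nonneg (fun x _ => bw_nonneg hp' x)]
    exact Finset.sum_congr rfl fun x _ => productBernoulli_singleton p' hp' x
  rw [hsum]
  apply ENNReal.ofReal_le_ofReal
  -- the real Chernoff bound
  have hmgf := mgf_le n p hp f hf_mono hf_lip s hs0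
  rw [← hM] at hmgf
  calc ∑ x ∈ hAfin.toFinset, bw p' x
      ≤ ∑ x ∈ hAfin.toFinset,
          bw p' x * Real.exp (s * f x) * Real.exp (-(s * (M + t))) := by
        apply Finset.sum_le_sum
        intro x hx
        have hxA : M + t ≤ f x := by
          have := (Set.Finite.mem_toFinset hAfin).mp hx
          exact this
        have h1 : (1:ℝ) ≤ Real.exp (s * f x) * Real.exp (-(s * (M + t))) := by
          rw [← Real.exp_add]
          apply Real.one_le_exp
          nlinarith
        nlinarith [bw_nonneg hp' x, h1]
    _ ≤ ∑ x, bw p' x * Real.exp (s * f x) * Real.exp (-(s * (M + t))) := by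
        apply Finset.sum_le_sum_of_subset_of_nonneg (Finset.subset_univ _)
        intro x _ _
        exact mul_nonneg (mul_nonneg (bw_nonneg hp' x) (Real.exp_pos _).le)
          (Real.exp_pos _).le
    _ = (∑ x, bw p' x * Real.exp (s * f x)) * Real.exp (-(s * (M + t))) := by
        rw [← Finset.sum_mul]
    _ ≤ Real.exp (s * M) * Real.exp (-(s * (M + t))) := by
        apply mul_le_mul_of_nonneg_right hmgf (Real.exp_pos _).le
    _ = Real.exp (-(s * t)) := by
        rw [← Real.exp_add]; ring_nf
    _ = 1 / k := by
        rw [hst, Real.exp_neg, Real.exp_log hk0, one_div]
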